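/- arXiv:1604.03448 — 2 statements merged into one kernel-verified Lean document; each statement's English description precedes it below -/
import Mathlib

section
/- Separability of the comparison Choi matrix in the repeater example: Fix d ∈ ℕ, d ≥ 2, set p = 1/(√d + 1), and let U be the d×d quantum Fourier transform with entries u_{jk} = e^{2πijk/d}/√d. Define Y = (1/d) Σ_{i,j=1}^d u_{ij} |ii⟩⟨jj| ∈ M_{d²}(ℂ), acting on ℂ^d_A ⊗ ℂ^d_B. On the space ℂ²_{A'} ⊗ ℂ²_{B'} ⊗ ℂ^d_A ⊗ ℂ^d_B, regarded as a 2×2-block-of-2×2-blocks matrix over the A'B' qubit indices with entries in M_{d²}(ℂ), define C_S = (1/(2(1+p))) · diag[(1−p)·(I_d/d)⊗(I_d/d), 2p·√(YY†), 2p·√(Y†Y), (1−p)·(I_d/d)⊗(I_d/d)], the four diagonal blocks corresponding to the A'B' basis states |00⟩, |01⟩, |10⟩, |11⟩ and all off-diagonal blocks zero. Then C_S is a density matrix that is separable with respect to the bipartition (A'A) : (B'B). -/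
open Matrix
open scoped Kronecker ComplexOrder
attribute [local instance] Classical.propDecidable

noncomputable section

/-- Real power of a Hermitian matrix via the continuous functional calculus
(with the Moore–Penrose convention `0 ^ r = 0` for `r ≠ 0`). -/
def matRPow {n : Type*} [Fintype n] [DecidableEq n] (A : Matrix n n ℂ) (r : ℝ) :
    Matrix n n ℂ :=
  cfc (fun x : ℝ => x ^ r) A

/-- Base-2 matrix logarithm via the continuous functional calculus. -/
def matLog2 {n : Type*} [Fintype n] [DecidableEq n] (A : Matrix n n ℂ) : Matrix n n ℂ :=
  cfc (fun x : ℝ => Real.logb 2 x) A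

/-- A density matrix: positive semidefinite with unit trace. -/
def IsState {n : Type*} [Fintype n] (ρ : Matrix n n ℂ) : Prop :=
  ρ.PosSemidef ∧ ρ.trace = 1

/-- The sandwiched α-Rényi divergence
`D_α(ρ‖σ) = (α−1)⁻¹ · log₂ tr[(σ^((1−α)/(2α)) ρ σ^((1−α)/(2α)))^α]`. -/
def sandwichedRenyi {n : Type*} [Fintype n] [DecidableEq n] (α : ℝ) (ρ σ : Matrix n n ℂ) : ℝ :=
  (α - 1)⁻¹ *
    Real.logb 2
      (matRPow (matRPow σ ((1 - α) / (2 * α)) * ρ * matRPow σ ((1 - α) / (2 * α))) α).trace.re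

/-- The Umegaki relative entropy `D(ρ‖σ) = tr[ρ log₂ ρ] − tr[ρ log₂ σ]`. -/
def relEnt {n : Type*} [Fintype n] [DecidableEq n] (ρ σ : Matrix n n ℂ) : ℝ :=
  ((ρ * matLog2 ρ).trace - (ρ * matLog2 σ).trace).re

/-- The max-relative entropy `D_max(ρ‖σ) = log₂ inf{c > 0 : c·σ − ρ ⪰ 0}` (with value `⊤`
if no such `c` exists). -/
def Dmax {n : Type*} [Fintype n] (ρ σ : Matrix n n ℂ) : EReal :=
  ⨅ c : {c : ℝ // 0 < c ∧ ((c : ℝ) • σ - ρ).PosSemidef}, ((Real.logb 2 (c : ℝ) : ℝ) : EReal)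

/-- Support inclusion for positive semidefinite matrices, expressed as domination:
`supp ρ ⊆ supp σ` iff `ρ ≤ c·σ` for some `c > 0`. -/
def supportLe {n : Type*} [Fintype n] (ρ σ : Matrix n n ℂ) : Prop :=
  ∃ c : ℝ, 0 < c ∧ ((c : ℝ) • σ - ρ).PosSemidef

/-- Extended-real-valued sandwiched α-Rényi divergence, `⊤` if the support condition fails. -/
def DalphaE {n : Type*} [Fintype n] [DecidableEq n] (α : ℝ) (ρ σ : Matrix n n ℂ) : EReal :=
  if supportLe ρ σ then ((sandwichedRenyi α ρ σ : ℝ) : EReal) else ⊤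

/-- Extended-real-valued Umegaki relative entropy, `⊤` if the support condition fails. -/
def DrelE {n : Type*} [Fintype n] [DecidableEq n] (ρ σ : Matrix n n ℂ) : EReal :=
  if supportLe ρ σ then ((relEnt ρ σ : ℝ) : EReal) else ⊤

/-- Separability of a bipartite state w.r.t. the bipartition given by the product index. -/
def IsSepState {A B : Type*} [Fintype A] [Fintype B]
    (σ : Matrix (A × B) (A × B) ℂ) : Prop :=
  ∃ (k : ℕ) (p : Fin k → ℝ) (τ₁ : Fin k → Matrix A A ℂ) (τ₂ : Fin k → Matrix B B ℂ),
    (∀ i, 0 ≤ p i) ∧ (∑ i, p i = 1) ∧ (∀ i, IsState (τ₁ i)) ∧ (∀ i, IsState (τ₂ i)) ∧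
      σ = ∑ i, (p i : ℂ) • (τ₁ i ⊗ₖ τ₂ i)

/-- The max-relative entropy of entanglement of a bipartite state. -/
def EmaxState {A B : Type*} [Fintype A] [Fintype B]
    (ρ : Matrix (A × B) (A × B) ℂ) : EReal :=
  ⨅ σ : {σ : Matrix (A × B) (A × B) ℂ // IsSepState σ}, Dmax ρ (σ : Matrix (A × B) (A × B) ℂ)

/-- The α-relative entropy of entanglement of a bipartite state. -/
def EalphaState {A B : Type*} [Fintype A] [Fintype B] [DecidableEq A] [DecidableEq B]
    (α : ℝ) (ρ : Matrix (A × B) (A × B) ℂ) : EReal :=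
  ⨅ σ : {σ : Matrix (A × B) (A × B) ℂ // IsSepState σ}, DalphaE α ρ (σ : Matrix (A × B) (A × B) ℂ)

/-- The relative entropy of entanglement of a bipartite state. -/
def ERState {A B : Type*} [Fintype A] [Fintype B] [DecidableEq A] [DecidableEq B]
    (ρ : Matrix (A × B) (A × B) ℂ) : EReal :=
  ⨅ σ : {σ : Matrix (A × B) (A × B) ℂ // IsSepState σ}, DrelE ρ (σ : Matrix (A × B) (A × B) ℂ)

/-- Partial application `id_R ⊗ T` of a map `T` to the second tensor factor. -/
def applyRight {R A B : Type*} (T : Matrix A A ℂ → Matrix B B ℂ)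
    (ρ : Matrix (R × A) (R × A) ℂ) : Matrix (R × B) (R × B) ℂ :=
  Matrix.of fun x y => T (Matrix.of fun a a' => ρ (x.1, a) (y.1, a')) x.2 y.2

/-- Partial application `id_R ⊗ T ⊗ id_S` of a map `T` to the middle tensor factor. -/
def applyMiddle {R A B S : Type*} (T : Matrix A A ℂ → Matrix B B ℂ)
    (ρ : Matrix (R × A × S) (R × A × S) ℂ) : Matrix (R × B × S) (R × B × S) ℂ :=
  Matrix.of fun x y => T (Matrix.of fun a a' => ρ (x.1, a, x.2.2) (y.1, a', y.2.2)) x.2.1 y.2.1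

/-- Regroup a tripartite index `A × (B × C)` as `(A × B) × C`. -/
def assocL {A B C : Type*} (ρ : Matrix (A × B × C) (A × B × C) ℂ) :
    Matrix ((A × B) × C) ((A × B) × C) ℂ :=
  ρ.submatrix (Equiv.prodAssoc A B C) (Equiv.prodAssoc A B C)

/-- The (normalized) Choi matrix `(id ⊗ T)(ω)` of a linear map `T`. -/
def choi {A B : Type*} [Fintype A] [DecidableEq A] (T : Matrix A A ℂ → Matrix B B ℂ) :
    Matrix (A × B) (A × B) ℂ :=
  Matrix.of fun x y => ((Fintype.card A : ℂ))⁻¹ * T (Matrix.single x.1 y.1 1) x.2 y.2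

/-- A quantum channel: linear, trace-preserving and completely positive
(the latter expressed by positive semidefiniteness of the Choi matrix). -/
def IsQChannel {A B : Type*} [Fintype A] [Fintype B] [DecidableEq A]
    (T : Matrix A A ℂ → Matrix B B ℂ) : Prop :=
  IsLinearMap ℂ T ∧ (∀ X, (T X).trace = X.trace) ∧ (choi T).PosSemidef

/-- The max-relative entropy of entanglement of a quantum channel:
`E_max(T) = sup {E_max^{R:B}((id_R ⊗ T)(ρ)) : ρ a state on R ⊗ A, dim R arbitrary}`. -/
def EmaxChan {A B : Type*} [Fintype A] [Fintype B]
    (T : Matrix A A ℂ → Matrix B B ℂ) : EReal :=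
  ⨆ (dR : ℕ) (ρ : {ρ : Matrix (Fin dR × A) (Fin dR × A) ℂ // IsState ρ}),
    EmaxState (applyRight T (ρ : Matrix (Fin dR × A) (Fin dR × A) ℂ))

/-- Partial trace over the second tensor factor. -/
def ptraceSnd {B C : Type*} [Fintype C] (M : Matrix (B × C) (B × C) ℂ) : Matrix B B ℂ :=
  Matrix.of fun b b' => ∑ c : C, M (b, c) (b', c)

/-- Partial trace over the third tensor factor. -/
def ptraceThird {A B C : Type*} [Fintype C] (ρ : Matrix (A × B × C) (A × B × C) ℂ) :
    Matrix (A × B) (A × B) ℂ :=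
  Matrix.of fun x y => ∑ c : C, ρ (x.1, x.2, c) (y.1, y.2, c)

/-- Tensoring with the identity on a third factor: `M ⊗ I_C` on `A ⊗ B ⊗ C`. -/
def tensorId3 {A B C : Type*} [DecidableEq C] [Fintype C] (M : Matrix (A × B) (A × B) ℂ) :
    Matrix (A × B × C) (A × B × C) ℂ :=
  (M ⊗ₖ (1 : Matrix C C ℂ)).submatrix (Equiv.prodAssoc A B C).symm (Equiv.prodAssoc A B C).symm

end
noncomputable section

/-- The trace norm `‖M‖₁ = tr[(M†M)^{1/2}]`. -/
def traceNorm {n : Type*} [Fintype n] [DecidableEq n] (M : Matrix n n ℂ) : ℝ :=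
  (matRPow (Mᴴ * M) (1 / 2 : ℝ)).trace.re

/-- The weighted trace norm `‖X‖_{1,τ} = tr|τ^{1/2} X τ^{1/2}|`. -/
def wnorm1 {n : Type*} [Fintype n] [DecidableEq n] (τ X : Matrix n n ℂ) : ℝ :=
  traceNorm (matRPow τ (1 / 2 : ℝ) * X * matRPow τ (1 / 2 : ℝ))

/-- The spectral (operator) norm of a matrix, as the operator norm of the induced
linear map on Euclidean space. -/
def specNorm {n : Type*} [Fintype n] [DecidableEq n] (M : Matrix n n ℂ) : ℝ :=
  ‖LinearMap.toContinuousLinearMap (Matrix.toEuclideanLin M)‖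

/-- The `d × d` quantum Fourier transform, `(U)_{jk} = e^{2πi jk/d}/√d` for `j,k ∈ {1,…,d}`. -/
def fourierMat (d : ℕ) : Matrix (Fin d) (Fin d) ℂ :=
  Matrix.of fun j k =>
    Complex.exp (2 * (Real.pi : ℂ) * Complex.I * ((((j : ℕ) : ℂ) + 1) * (((k : ℕ) : ℂ) + 1))
        / (d : ℂ)) / ((Real.sqrt d : ℝ) : ℂ)

/-- `U_1 = 1` and `U_2` the quantum Fourier transform. -/
def flowerU (d : ℕ) : Fin 2 → Matrix (Fin d) (Fin d) ℂ :=
  fun l => if l = 0 then 1 else fourierMat d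

/-- The flower state `ρ^f = (1/2d) Σ_{i,k} Σ_{j,l} ⟨k|U_l† U_j|i⟩ |ii⟩⟨kk|_{AB} ⊗ |jj⟩⟨ll|_{A'B'}`,
written on the index `(A × A') × (B × B')` (input system times output system). -/
def flowerState (d : ℕ) :
    Matrix ((Fin d × Fin 2) × (Fin d × Fin 2)) ((Fin d × Fin 2) × (Fin d × Fin 2)) ℂ :=
  Matrix.of fun x y =>
    if x.2.1 = x.1.1 ∧ x.2.2 = x.1.2 ∧ y.2.1 = y.1.1 ∧ y.2.2 = y.1.2 then
      (1 / (2 * (d : ℂ))) * (((flowerU d y.1.2)ᴴ * flowerU d x.1.2) y.1.1 x.1.1)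
    else 0

/-- `p = 1/(√d + 1)`. -/
def pparam (d : ℕ) : ℝ := 1 / (Real.sqrt d + 1)

/-- `Y = (1/d) Σ_{i,j} u_{ij} |ii⟩⟨jj|` on `ℂ^d_A ⊗ ℂ^d_B`, `u` the QFT entries. -/
def Ymat (d : ℕ) : Matrix (Fin d × Fin d) (Fin d × Fin d) ℂ :=
  Matrix.of fun x y =>
    if x.1 = x.2 ∧ y.1 = y.2 then (1 / (d : ℂ)) * fourierMat d x.1 y.1 else 0

/-- The blocks of the separable comparison Choi matrix `C_S`, indexed by the `A'B'` qubit pair. -/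
def CSblock (d : ℕ) (i j : Fin 2 × Fin 2) : Matrix (Fin d × Fin d) (Fin d × Fin d) ℂ :=
  if i = j then
    if i = (0, 1) then ((2 * pparam d : ℝ) : ℂ) • matRPow (Ymat d * (Ymat d)ᴴ) (1 / 2 : ℝ)
    else if i = (1, 0) then ((2 * pparam d : ℝ) : ℂ) • matRPow ((Ymat d)ᴴ * Ymat d) (1 / 2 : ℝ)
    else (((1 - pparam d) / (d ^ 2 : ℝ) : ℝ) : ℂ) • (1 : Matrix (Fin d × Fin d) (Fin d × Fin d) ℂ)
  else 0

/-- The separable comparison Choi matrix `C_S` on `ℂ²_{A'} ⊗ ℂ²_{B'} ⊗ ℂ^d_A ⊗ ℂ^d_B`,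
written on the index `(A' × A) × (B' × B)` grouping the bipartition `(A'A) : (B'B)`. -/
def CSmat (d : ℕ) :
    Matrix ((Fin 2 × Fin d) × (Fin 2 × Fin d)) ((Fin 2 × Fin d) × (Fin 2 × Fin d)) ℂ :=
  Matrix.of fun x y =>
    (1 / (2 * (1 + pparam d) : ℝ) : ℂ) *
      CSblock d (x.1.1, x.2.1) (y.1.1, y.2.1) (x.1.2, x.2.2) (y.1.2, y.2.2)

/-- The blocks of the matrix `M` (the partially transposed state), indexed by the `A'B'`
qubit pair. -/
def Mblock (d : ℕ) (i j : Fin 2 × Fin 2) : Matrix (Fin d × Fin d) (Fin d × Fin d) ℂ :=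
  if i = j then
    if i = (0, 1) then ((pparam d : ℝ) : ℂ) • matRPow (Ymat d * (Ymat d)ᴴ) (1 / 2 : ℝ)
    else if i = (1, 0) then ((pparam d : ℝ) : ℂ) • matRPow ((Ymat d)ᴴ * Ymat d) (1 / 2 : ℝ)
    else (((1 - pparam d) / (d ^ 2 : ℝ) : ℝ) : ℂ) • (1 : Matrix (Fin d × Fin d) (Fin d × Fin d) ℂ)
  else if i = (0, 1) ∧ j = (1, 0) then ((pparam d : ℝ) : ℂ) • Ymat d
  else if i = (1, 0) ∧ j = (0, 1) then ((pparam d : ℝ) : ℂ) • (Ymat d)ᴴ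
  else 0

/-- The matrix `M` on `ℂ²_{A'} ⊗ ℂ²_{B'} ⊗ ℂ^d_A ⊗ ℂ^d_B`, written on the index
`(A' × A) × (B' × B)`. -/
def Mmat (d : ℕ) :
    Matrix ((Fin 2 × Fin d) × (Fin 2 × Fin d)) ((Fin 2 × Fin d) × (Fin 2 × Fin d)) ℂ :=
  Matrix.of fun x y =>
    (1 / 2 : ℂ) * Mblock d (x.1.1, x.2.1) (y.1.1, y.2.1) (x.1.2, x.2.2) (y.1.2, y.2.2)

end

noncomputable section
namespace RepeaterCS

open Complex

/-! ### Auxiliary lemmas -/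

open scoped MatrixOrder in
lemma matRPow_half_eq_sqrt {n : Type*} [Fintype n] [DecidableEq n]
    {A : Matrix n n ℂ} (hA : A.PosSemidef) :
    matRPow A (1/2 : ℝ) = CFC.sqrt A := by
  unfold matRPow
  have h : (fun x : ℝ => x ^ ((1:ℝ)/2)) = Real.sqrt := by
    funext x; rw [Real.sqrt_eq_rpow]
  rw [h, CFC.sqrt_eq_real_sqrt A hA.nonneg, cfcₙ_eq_cfc]

open scoped MatrixOrder in
lemma matRPow_half_eq_of_sq {n : Type*} [Fintype n] [DecidableEq n]
    {A B : Matrix n n ℂ} (hA : A.PosSemidef) (hB : B.PosSemidef) (h : B * B = A) :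
    matRPow A (1/2 : ℝ) = B := by
  rw [matRPow_half_eq_sqrt hA]
  exact CFC.sqrt_unique h hB.nonneg

lemma fourier_term (d : ℕ) (hd0 : (d:ℂ) ≠ 0) (j l k : Fin d) :
    fourierMat d j k * (starRingEnd ℂ) (fourierMat d l k)
      = Complex.exp (2 * (Real.pi:ℂ) * Complex.I * (((j:ℕ):ℂ) - ((l:ℕ):ℂ)) / d) ^ ((k:ℕ)+1) / d := by
  have hdR : (0:ℝ) ≤ d := Nat.cast_nonneg d
  have hs : ((Real.sqrt d : ℝ):ℂ) * ((Real.sqrt d : ℝ):ℂ) = (d:ℂ) := by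
    rw [← Complex.ofReal_mul, Real.mul_self_sqrt hdR]; norm_cast
  unfold fourierMat
  simp only [Matrix.of_apply, map_div₀, ← Complex.exp_conj, _root_.map_mul, map_add, _root_.map_one,
    Complex.conj_I, Complex.conj_ofReal, map_natCast, _root_.map_ofNat]
  rw [div_mul_div_comm, ← Complex.exp_add, hs, ← Complex.exp_nat_mul]
  congr 2
  push_cast
  field_simp
  ring

lemma fourier_orth (d : ℕ) (hd : 0 < d) (j l : Fin d) :
    ∑ k : Fin d, fourierMat d j k * (starRingEnd ℂ) (fourierMat d l k)
      = if j = l then 1 else 0 := by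
  have hd0 : (d:ℂ) ≠ 0 := Nat.cast_ne_zero.mpr hd.ne'
  simp only [fourier_term d hd0 j l]
  rw [← Finset.sum_div]
  by_cases hjl : j = l
  · subst hjl
    simp [Finset.card_univ, hd0]
  · have hc1 : Complex.exp (2 * (Real.pi:ℂ) * Complex.I * (((j:ℕ):ℂ) - ((l:ℕ):ℂ)) / d) ≠ 1 := by
      intro h
      rw [Complex.exp_eq_one_iff] at h
      obtain ⟨n, hn⟩ := h
      have hpi : (2 * (Real.pi:ℂ) * Complex.I) ≠ 0 := by
        simp [Real.pi_ne_zero, Complex.I_ne_zero]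
      have h2 : (((j:ℕ):ℂ) - ((l:ℕ):ℂ)) = n * d := by
        field_simp at hn
        apply mul_left_cancel₀ hpi
        rw [hn]; ring
      have h3 : ((j:ℤ) - (l:ℤ)) = n * d := by exact_mod_cast h2
      have hjd : (j:ℤ) < d := by exact_mod_cast j.2
      have hld : (l:ℤ) < d := by exact_mod_cast l.2
      have hj0 : (0:ℤ) ≤ (j:ℤ) := by positivity
      have hl0 : (0:ℤ) ≤ (l:ℤ) := by positivity
      have hne : (j:ℤ) ≠ (l:ℤ) := by
        simpa [Fin.ext_iff] using hjl
      have : ((j:ℤ) - (l:ℤ)) = 0 := by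
        refine Int.eq_zero_of_abs_lt_dvd (m := (d:ℤ)) ⟨n, by rw [h3]; ring⟩ ?_
        rw [abs_sub_lt_iff]; omega
      omega
    have hcd : Complex.exp (2 * (Real.pi:ℂ) * Complex.I * (((j:ℕ):ℂ) - ((l:ℕ):ℂ)) / d) ^ d = 1 := by
      rw [← Complex.exp_nat_mul]
      have harg : (d:ℂ) * (2 * (Real.pi:ℂ) * Complex.I * (((j:ℕ):ℂ) - ((l:ℕ):ℂ)) / d)
          = (((j:ℤ) - (l:ℤ) : ℤ):ℂ) * (2 * (Real.pi:ℂ) * Complex.I) := by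
        push_cast
        field_simp
      rw [harg, Complex.exp_int_mul_two_pi_mul_I]
    set c := Complex.exp (2 * (Real.pi:ℂ) * Complex.I * (((j:ℕ):ℂ) - ((l:ℕ):ℂ)) / d) with hc
    have hsum : ∑ k : Fin d, c ^ ((k:ℕ)+1) = c * ∑ k ∈ Finset.range d, c ^ k := by
      rw [Finset.mul_sum, ← Fin.sum_univ_eq_sum_range]
      exact Finset.sum_congr rfl fun k _ => by rw [pow_succ, mul_comm]
    rw [hsum, geom_sum_eq hc1, hcd]
    simp [hjl]

lemma fourier_symm (d : ℕ) (j k : Fin d) : fourierMat d j k = fourierMat d k j := by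
  unfold fourierMat
  simp only [Matrix.of_apply]
  ring_nf

/-- The common square root of the two middle blocks: `(1/d) Σ_i |ii⟩⟨ii|`. -/
def Bd (d : ℕ) : Matrix (Fin d × Fin d) (Fin d × Fin d) ℂ :=
  Matrix.diagonal (fun x => if x.1 = x.2 then ((d:ℂ))⁻¹ else 0)

lemma Bd_posSemidef (d : ℕ) : (Bd d).PosSemidef := by
  refine Matrix.posSemidef_diagonal_iff.mpr fun x => ?_
  split_ifs
  · rw [show ((d:ℂ))⁻¹ = (((d:ℝ)⁻¹ : ℝ) : ℂ) by push_cast; ring]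
    exact Complex.zero_le_real.mpr (by positivity)
  · exact le_refl 0

lemma sum_diag_ite {α : Type*} [Fintype α] [DecidableEq α] (G : α → ℂ) :
    ∑ z : α × α, (if z.1 = z.2 then G z.1 else 0) = ∑ k, G k := by
  rw [Fintype.sum_prod_type]
  simp

lemma Bd_mul_Bd (d : ℕ) :
    Bd d * Bd d
      = Matrix.diagonal (fun x : Fin d × Fin d => if x.1 = x.2 then ((d:ℂ))⁻¹ * ((d:ℂ))⁻¹ else 0) := by
  unfold Bd
  rw [Matrix.diagonal_mul_diagonal]
  refine congrArg _ (funext fun x => ?_)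
  split_ifs <;> simp

lemma YYH_eq (d : ℕ) (hd : 0 < d) : Ymat d * (Ymat d)ᴴ = Bd d * Bd d := by
  have hd0 : (d:ℂ) ≠ 0 := Nat.cast_ne_zero.mpr hd.ne'
  rw [Bd_mul_Bd]
  ext x y
  rw [Matrix.mul_apply]
  simp only [Ymat, Matrix.conjTranspose_apply, Matrix.of_apply, Matrix.diagonal_apply]
  by_cases hx : x.1 = x.2
  · by_cases hy : y.1 = y.2
    · have hterm : ∀ z : Fin d × Fin d,
          (if x.1 = x.2 ∧ z.1 = z.2 then 1 / (d:ℂ) * fourierMat d x.1 z.1 else 0)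
            * star (if y.1 = y.2 ∧ z.1 = z.2 then 1 / (d:ℂ) * fourierMat d y.1 z.1 else 0)
          = if z.1 = z.2 then (1 / (d:ℂ) * (1 / (d:ℂ)))
              * (fourierMat d x.1 z.1 * (starRingEnd ℂ) (fourierMat d y.1 z.1)) else 0 := by
        intro z
        by_cases h : z.1 = z.2
        · rw [if_pos ⟨hx, h⟩, if_pos ⟨hy, h⟩, if_pos h]
          simp only [star_mul', Complex.star_def, map_div₀, _root_.map_one, map_natCast]
          ring
        · rw [if_neg (fun hc => h hc.2), if_neg (fun hc => h hc.2), if_neg h]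
          simp
      rw [Finset.sum_congr rfl fun z _ => hterm z,
        sum_diag_ite (fun k => 1 / (d:ℂ) * (1 / (d:ℂ))
          * (fourierMat d x.1 k * (starRingEnd ℂ) (fourierMat d y.1 k))),
        ← Finset.mul_sum, fourier_orth d hd x.1 y.1]
      by_cases h1 : x.1 = y.1
      · have hxy : x = y := Prod.ext h1 (by rw [← hx, ← hy, h1])
        rw [if_pos h1, if_pos hxy, if_pos hx]
        ring
      · have hxy : x ≠ y := fun h => h1 (congrArg Prod.fst h)
        rw [if_neg h1, if_neg hxy]
        ring
    · simp only [hy, false_and, if_false, star_zero, mul_zero, Finset.sum_const_zero]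
      rcases eq_or_ne x y with rfl | hne
      · exact absurd hx hy
      · simp [hne]
  · simp [hx]

lemma YHY_eq (d : ℕ) (hd : 0 < d) : (Ymat d)ᴴ * Ymat d = Bd d * Bd d := by
  have hd0 : (d:ℂ) ≠ 0 := Nat.cast_ne_zero.mpr hd.ne'
  rw [Bd_mul_Bd]
  ext x y
  rw [Matrix.mul_apply]
  simp only [Ymat, Matrix.conjTranspose_apply, Matrix.of_apply, Matrix.diagonal_apply]
  by_cases hx : x.1 = x.2
  · by_cases hy : y.1 = y.2
    · have hterm : ∀ z : Fin d × Fin d,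
          star (if z.1 = z.2 ∧ x.1 = x.2 then 1 / (d:ℂ) * fourierMat d z.1 x.1 else 0)
            * (if z.1 = z.2 ∧ y.1 = y.2 then 1 / (d:ℂ) * fourierMat d z.1 y.1 else 0)
          = if z.1 = z.2 then (1 / (d:ℂ) * (1 / (d:ℂ)))
              * (fourierMat d y.1 z.1 * (starRingEnd ℂ) (fourierMat d x.1 z.1)) else 0 := by
        intro z
        by_cases h : z.1 = z.2
        · rw [if_pos ⟨h, hx⟩, if_pos ⟨h, hy⟩, if_pos h,
            fourier_symm d z.1 x.1, fourier_symm d z.1 y.1]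
          simp only [star_mul', Complex.star_def, map_div₀, _root_.map_one, map_natCast]
          ring
        · rw [if_neg (fun hc => h hc.1), if_neg (fun hc => h hc.1), if_neg h]
          simp
      rw [Finset.sum_congr rfl fun z _ => hterm z,
        sum_diag_ite (fun k => 1 / (d:ℂ) * (1 / (d:ℂ))
          * (fourierMat d y.1 k * (starRingEnd ℂ) (fourierMat d x.1 k))),
        ← Finset.mul_sum, fourier_orth d hd y.1 x.1]
      by_cases h1 : y.1 = x.1
      · have hxy : x = y := Prod.ext h1.symm (by rw [← hx, ← hy, h1])
        rw [if_pos h1, if_pos hxy, if_pos hx]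
        ring
      · have hxy : x ≠ y := fun h => h1 (congrArg Prod.fst h.symm)
        rw [if_neg h1, if_neg hxy]
        ring
    · simp only [hy, and_false, if_false, mul_zero, Finset.sum_const_zero]
      rcases eq_or_ne x y with rfl | hne
      · exact absurd hx hy
      · simp [hne]
  · simp [hx]

lemma matRPow_YYH (d : ℕ) (hd : 0 < d) :
    matRPow (Ymat d * (Ymat d)ᴴ) (1/2 : ℝ) = Bd d :=
  matRPow_half_eq_of_sq (Matrix.posSemidef_self_mul_conjTranspose _) (Bd_posSemidef d)
    (YYH_eq d hd).symm

lemma matRPow_YHY (d : ℕ) (hd : 0 < d) :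
    matRPow ((Ymat d)ᴴ * Ymat d) (1/2 : ℝ) = Bd d :=
  matRPow_half_eq_of_sq (Matrix.posSemidef_conjTranspose_mul_self _) (Bd_posSemidef d)
    (YHY_eq d hd).symm

lemma pparam_pos (d : ℕ) : 0 < pparam d := by
  unfold pparam
  positivity

lemma pparam_le_one (d : ℕ) : pparam d ≤ 1 := by
  unfold pparam
  rw [div_le_one (by positivity)]
  nlinarith [Real.sqrt_nonneg d]

/-- The diagonal values of the blocks of `C_S` (before the overall normalization). -/
def blockvR (d : ℕ) (i : Fin 2 × Fin 2) (a : Fin d × Fin d) : ℝ :=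
  if i.1 = i.2 then (1 - pparam d) / (d^2 : ℝ)
  else if a.1 = a.2 then 2 * pparam d / d else 0

lemma CSblock_eq (d : ℕ) (hd : 0 < d) (i j : Fin 2 × Fin 2) :
    CSblock d i j
      = if i = j then Matrix.diagonal (fun a : Fin d × Fin d => ((blockvR d i a : ℝ) : ℂ))
        else 0 := by
  unfold CSblock
  by_cases hij : i = j
  · rw [if_pos hij, if_pos hij]
    obtain ⟨i1, i2⟩ := i
    fin_cases i1 <;> fin_cases i2
    · rw [if_neg (by decide), if_neg (by decide)]
      ext a b
      simp only [Matrix.smul_apply, Matrix.one_apply, Matrix.diagonal_apply, blockvR,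
        smul_eq_mul]
      split_ifs <;> simp_all <;> push_cast <;> ring
    · rw [if_pos (by decide), matRPow_YYH d hd]
      unfold Bd
      ext a b
      simp only [Matrix.smul_apply, Matrix.diagonal_apply, blockvR, smul_eq_mul]
      split_ifs <;> simp_all <;> push_cast <;> ring
    · rw [if_neg (by decide), if_pos (by decide), matRPow_YHY d hd]
      unfold Bd
      ext a b
      simp only [Matrix.smul_apply, Matrix.diagonal_apply, blockvR, smul_eq_mul]
      split_ifs <;> simp_all <;> push_cast <;> ring
    · rw [if_neg (by decide), if_neg (by decide)]
      ext a b
      simp only [Matrix.smul_apply, Matrix.one_apply, Matrix.diagonal_apply, blockvR,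
        smul_eq_mul]
      split_ifs <;> simp_all <;> push_cast <;> ring
  · rw [if_neg hij, if_neg hij]

/-- The diagonal entries of `C_S`. -/
def rvec (d : ℕ) (x : (Fin 2 × Fin d) × (Fin 2 × Fin d)) : ℝ :=
  (1 / (2 * (1 + pparam d))) * blockvR d (x.1.1, x.2.1) (x.1.2, x.2.2)

lemma CSmat_eq (d : ℕ) (hd : 0 < d) :
    CSmat d = Matrix.diagonal (fun x => ((rvec d x : ℝ) : ℂ)) := by
  ext x y
  simp only [CSmat, Matrix.of_apply]
  rw [CSblock_eq d hd]
  rcases eq_or_ne x y with rfl | hne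
  · rw [if_pos rfl, Matrix.diagonal_apply_eq, Matrix.diagonal_apply_eq]
    unfold rvec
    push_cast
    ring
  · rw [Matrix.diagonal_apply_ne _ hne]
    by_cases hij : ((x.1.1, x.2.1) : Fin 2 × Fin 2) = (y.1.1, y.2.1)
    · rw [if_pos hij]
      have hab : ((x.1.2, x.2.2) : Fin d × Fin d) ≠ (y.1.2, y.2.2) := by
        intro h
        rw [Prod.mk.injEq] at hij h
        exact hne (Prod.ext (Prod.ext hij.1 h.1) (Prod.ext hij.2 h.2))
      rw [Matrix.diagonal_apply_ne _ hab, mul_zero]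
    · rw [if_neg hij]
      simp

lemma rvec_nonneg (d : ℕ) (x : (Fin 2 × Fin d) × (Fin 2 × Fin d)) : 0 ≤ rvec d x := by
  have h0 := pparam_pos d
  have h1 := pparam_le_one d
  unfold rvec blockvR
  have hs : (0:ℝ) ≤ 1 / (2 * (1 + pparam d)) := by positivity
  refine mul_nonneg hs ?_
  split_ifs
  · apply div_nonneg (by linarith) (by positivity)
  · positivity
  · exact le_refl 0

lemma rvec_sum (d : ℕ) (hd : 0 < d) :
    ∑ x : (Fin 2 × Fin d) × (Fin 2 × Fin d), rvec d x = 1 := by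
  have h0 := pparam_pos d
  have hdR : (0:ℝ) < d := by exact_mod_cast hd
  simp only [Fintype.sum_prod_type, rvec, blockvR]
  simp only [Fin.sum_univ_two]
  simp only [zero_ne_one, one_ne_zero, if_false, Fin.isValue]
  simp only [mul_ite, mul_zero, Finset.sum_ite_eq, Finset.sum_ite_eq', Finset.mem_univ, if_true,
    Finset.sum_const, Finset.card_univ, Fintype.card_fin, nsmul_eq_mul]
  have h1p : (1 + pparam d) ≠ 0 := by positivity
  have hdne : (d:ℝ) ≠ 0 := hdR.ne'
  field_simp
  ring

lemma stdBasis_isState {A : Type*} [Fintype A] [DecidableEq A] (a : A) :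
    IsState (Matrix.single a a (1:ℂ)) := by
  have hdiag : Matrix.single a a (1:ℂ) = Matrix.diagonal (Pi.single a 1) := by
    ext i j
    by_cases h1 : a = i <;> by_cases h2 : a = j <;>
      simp [Matrix.single, Matrix.diagonal_apply, Pi.single_apply, h1, h2] <;>
      simp_all [eq_comm]
  constructor
  · rw [hdiag]
    refine Matrix.posSemidef_diagonal_iff.mpr fun i => ?_
    rcases eq_or_ne i a with rfl | h
    · simp
    · simp [Pi.single_apply, h]
  · simp [Matrix.trace_single_eq_same]

lemma isSepState_diagonal {A B : Type*} [Fintype A] [Fintype B] [DecidableEq A] [DecidableEq B]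
    (c : A × B → ℝ) (hc : ∀ x, 0 ≤ c x) (hsum : ∑ x, c x = 1) :
    IsSepState (Matrix.diagonal (fun x => (c x : ℂ))) := by
  classical
  set e := (Fintype.equivFin (A × B)).symm with he
  refine ⟨Fintype.card (A × B), fun i => c (e i),
    fun i => Matrix.single (e i).1 (e i).1 1,
    fun i => Matrix.single (e i).2 (e i).2 1,
    fun i => hc _, ?_, fun i => stdBasis_isState _, fun i => stdBasis_isState _, ?_⟩
  · rw [Equiv.sum_comp e c]
    exact hsum
  · ext x y
    rw [Matrix.sum_apply]
    rw [Equiv.sum_comp e (fun z : A × B =>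
      (((c z : ℝ) : ℂ) • (Matrix.single z.1 z.1 1 ⊗ₖ Matrix.single z.2 z.2 1)) x y)]
    rw [Finset.sum_eq_single_of_mem x (Finset.mem_univ x)]
    · simp only [Matrix.smul_apply, Matrix.kroneckerMap_apply, smul_eq_mul,
        Matrix.single, Matrix.of_apply]
      rcases eq_or_ne x y with rfl | hne
      · simp [Matrix.diagonal_apply_eq]
      · rw [Matrix.diagonal_apply_ne _ hne]
        have : x.1 ≠ y.1 ∨ x.2 ≠ y.2 := by
          by_contra h
          push_neg at h
          exact hne (Prod.ext h.1 h.2)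
        rcases this with h | h <;> simp [h]
    · intro z _ hz
      simp only [Matrix.smul_apply, Matrix.kroneckerMap_apply, smul_eq_mul,
        Matrix.single, Matrix.of_apply]
      have : z.1 ≠ x.1 ∨ z.2 ≠ x.2 := by
        by_contra h
        push_neg at h
        exact hz (Prod.ext h.1 h.2)
      rcases this with h | h <;> simp [h]

end RepeaterCS
end

/-- **Separability of the comparison Choi matrix** in the repeater example: `C_S` is a density
matrix that is separable w.r.t. the bipartition `(A'A) : (B'B)`. -/
theorem repeater_CS_separable (d : ℕ) (hd : 2 ≤ d) :
    IsState (CSmat d) ∧ IsSepState (CSmat d) := by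
  have hd0 : 0 < d := by omega
  rw [RepeaterCS.CSmat_eq d hd0]
  refine ⟨⟨Matrix.posSemidef_diagonal_iff.mpr fun x =>
      Complex.zero_le_real.mpr (RepeaterCS.rvec_nonneg d x), ?_⟩,
    RepeaterCS.isSepState_diagonal _ (RepeaterCS.rvec_nonneg d) (RepeaterCS.rvec_sum d hd0)⟩
  rw [Matrix.trace_diagonal]
  push_cast [← Complex.ofReal_sum]
  exact_mod_cast RepeaterCS.rvec_sum d hd0
end

section
/- Max-relative entropy computation in the repeater example: Fix d ∈ ℕ, d ≥ 2, set p = 1/(√d + 1), and let U be the d×d quantum Fourier transform with entries u_{jk} = e^{2πijk/d}/√d. Define Y = (1/d) Σ_{i,j=1}^d u_{ij} |ii⟩⟨jj| ∈ M_{d²}(ℂ). On ℂ²_{A'} ⊗ ℂ²_{B'} ⊗ ℂ^d_A ⊗ ℂ^d_B, regarded as a 4×4 block matrix over the A'B' qubit indices (ordered |00⟩, |01⟩, |10⟩, |11⟩) with entries in M_{d²}(ℂ), define C_S = (1/(2(1+p))) · diag[(1−p)·(I_d/d)⊗(I_d/d), 2p·√(YY†), 2p·√(Y†Y), (1−p)·(I_d/d)⊗(I_d/d)]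 (off-diagonal blocks zero), and define M as the block matrix with diagonal blocks (1/2)·[(1−p)·(I_d/d)⊗(I_d/d), p·√(YY†), p·√(Y†Y), (1−p)·(I_d/d)⊗(I_d/d)], with block entry p·Y/2 at block position (|01⟩,|10⟩), block entry p·Y†/2 at block position (|10⟩,|01⟩), and all other off-diagonal blocks zero. Then (1+p)·C_S − M is positive semidefinite; equivalently, D_max(M‖C_S) ≤ log₂(1 + p) = log₂(1 + 1/(√d + 1)). -/
open Matrix
open scoped Kronecker ComplexOrder
attribute [local instance] Classical.propDecidable

noncomputable section
lemma fourier_symm (d : ℕ) (a b : Fin d) : fourierMat d a b = fourierMat d b a := by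
  simp only [fourierMat, of_apply]
  ring_nf

lemma fourier_unitary (d : ℕ) (hd : 2 ≤ d) (j k : Fin d) :
    ∑ i : Fin d, (starRingEnd ℂ) (fourierMat d i j) * fourierMat d i k
      = if j = k then 1 else 0 := by
  have hd0 : (d : ℂ) ≠ 0 := by exact_mod_cast (by omega : d ≠ 0)
  have hsq : ((Real.sqrt d : ℝ) : ℂ) * ((Real.sqrt d : ℝ) : ℂ) = (d : ℂ) := by
    rw [← Complex.ofReal_mul, Real.mul_self_sqrt (by positivity)]
    norm_num
  set z : ℂ := 2 * (Real.pi : ℂ) * Complex.I * (((k : ℕ) : ℂ) - ((j : ℕ) : ℂ)) / d with hz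
  have hterm : ∀ i : Fin d,
      (starRingEnd ℂ) (fourierMat d i j) * fourierMat d i k
        = Complex.exp z ^ ((i : ℕ) + 1) / d := by
    intro i
    have hconj : (starRingEnd ℂ) (fourierMat d i j)
        = Complex.exp (-(2 * (Real.pi : ℂ) * Complex.I *
            ((((i : ℕ) : ℂ) + 1) * (((j : ℕ) : ℂ) + 1)) / d)) / ((Real.sqrt d : ℝ) : ℂ) := by
      simp only [fourierMat, of_apply, map_div₀, ← Complex.exp_conj, Complex.conj_ofReal]
      congr 2
      simp only [map_div₀, _root_.map_mul, _root_.map_add, _root_.map_one, Complex.conj_I,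
        Complex.conj_ofReal, Complex.conj_natCast, map_ofNat]
      ring
    rw [hconj]
    simp only [fourierMat, of_apply]
    rw [div_mul_div_comm, ← Complex.exp_add, hsq]
    have hpow : Complex.exp z ^ ((i : ℕ) + 1)
        = Complex.exp (((((i : ℕ) : ℂ)) + 1) * z) := by
      rw [← Complex.exp_nat_mul]
      push_cast
      ring_nf
    rw [hpow]
    congr 2
    rw [hz]
    field_simp
    ring
  rw [Finset.sum_congr rfl fun i _ => hterm i]
  by_cases hjk : j = k
  · subst hjk
    have hz0 : z = 0 := by rw [hz]; ring
    simp only [hz0, Complex.exp_zero, one_pow, Finset.sum_const, Finset.card_univ,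
      Fintype.card_fin, nsmul_eq_mul, mul_one]
    norm_num
    field_simp
  · rw [if_neg hjk]
    have hzd : Complex.exp z ^ d = 1 := by
      rw [← Complex.exp_nat_mul]
      have : (d : ℂ) * z = (((k : ℤ) - (j : ℤ) : ℤ) : ℂ) * (2 * (Real.pi : ℂ) * Complex.I) := by
        rw [hz]; push_cast; field_simp
      rw [this, Complex.exp_int_mul_two_pi_mul_I]
    have h2pi : (2 * (Real.pi : ℂ) * Complex.I) ≠ 0 := by
      simp [Real.pi_ne_zero, Complex.I_ne_zero]
    have hz1 : Complex.exp z ≠ 1 := by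
      intro h
      rw [Complex.exp_eq_one_iff] at h
      obtain ⟨n, hn⟩ := h
      rw [hz] at hn
      field_simp at hn
      have h1 : 2 * (Real.pi : ℂ) * Complex.I * (((k : ℕ) : ℂ) - ((j : ℕ) : ℂ))
          = 2 * (Real.pi : ℂ) * Complex.I * ((n : ℂ) * d) := by
        linear_combination (2 * (Real.pi : ℂ) * Complex.I) * hn
      have hc : ((k : ℕ) : ℂ) - ((j : ℕ) : ℂ) = (n : ℂ) * d := mul_left_cancel₀ h2pi h1
      have hint : ((k : ℕ) : ℤ) - ((j : ℕ) : ℤ) = n * d := by exact_mod_cast hc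
      have hkd : ((k : ℕ) : ℤ) < d := by exact_mod_cast k.isLt
      have hjd : ((j : ℕ) : ℤ) < d := by exact_mod_cast j.isLt
      have hk0 : (0 : ℤ) ≤ ((k : ℕ) : ℤ) := by positivity
      have hj0 : (0 : ℤ) ≤ ((j : ℕ) : ℤ) := by positivity
      have hdz : (0 : ℤ) < d := by exact_mod_cast (by omega : 0 < d)
      have hn0 : n = 0 := by
        rcases lt_trichotomy n 0 with h | h | h
        · have : n * d ≤ (-1) * d := mul_le_mul_of_nonneg_right (by omega) (le_of_lt hdz)
          linarith
        · exact h
        · have : 1 * d ≤ n * d := mul_le_mul_of_nonneg_right (by omega) (le_of_lt hdz)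
          linarith
      apply hjk
      apply Fin.ext
      have : ((k : ℕ) : ℤ) = ((j : ℕ) : ℤ) := by rw [hn0] at hint; omega
      exact_mod_cast this.symm
    have hs : ∑ i : Fin d, Complex.exp z ^ ((i : ℕ) + 1)
        = (∑ i ∈ Finset.range d, Complex.exp z ^ i) * Complex.exp z := by
      rw [Fin.sum_univ_eq_sum_range (fun i => Complex.exp z ^ (i + 1)) d, Finset.sum_mul]
      exact Finset.sum_congr rfl fun i _ => pow_succ _ _
    rw [← Finset.sum_div, hs, geom_sum_eq hz1, hzd, sub_self, zero_div, zero_mul, zero_div]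
lemma matRPow_smul_proj {n : Type*} [Fintype n] [DecidableEq n] [Nonempty n]
    (P : Matrix n n ℂ) (hP : IsSelfAdjoint P) (hP2 : P * P = P) (c : ℝ) (hc : 0 < c) :
    matRPow ((c : ℝ) • P) (1 / 2 : ℝ) = (Real.sqrt c : ℝ) • P := by
  set a : Matrix n n ℂ := (c : ℝ) • P with ha
  have hsa : IsSelfAdjoint a := IsSelfAdjoint.smul (star_trivial c) hP
  have h1P : ((1 : Matrix n n ℂ) - P) * P = 0 := by
    rw [sub_mul, one_mul, hP2, sub_self]
  have hP1 : P * ((1 : Matrix n n ℂ) - P) = 0 := by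
    rw [mul_sub, mul_one, hP2, sub_self]
  have hspec : spectrum ℝ a ⊆ {0, c} := by
    intro t ht
    by_contra hcon
    simp only [Set.mem_insert_iff, Set.mem_singleton_iff, not_or] at hcon
    obtain ⟨ht0, htc⟩ := hcon
    rw [spectrum.mem_iff] at ht
    apply ht
    have halg : algebraMap ℝ (Matrix n n ℂ) t = t • (1 : Matrix n n ℂ) :=
      Algebra.algebraMap_eq_smul_one t
    set Q : Matrix n n ℂ := t⁻¹ • ((1 : Matrix n n ℂ) - P) + (t - c)⁻¹ • P with hQ
    have hmul : (algebraMap ℝ (Matrix n n ℂ) t - a) * Q = 1 := by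
      rw [halg, hQ, ha, sub_mul, mul_add, mul_add, smul_mul_assoc, smul_mul_assoc,
        smul_mul_assoc, smul_mul_assoc, one_mul, one_mul, mul_smul_comm, mul_smul_comm,
        hP1, hP2]
      have : t • t⁻¹ • ((1 : Matrix n n ℂ) - P) + t • (t - c)⁻¹ • P -
          (c • t⁻¹ • (0 : Matrix n n ℂ) + c • (t - c)⁻¹ • P)
          = (t * t⁻¹) • ((1 : Matrix n n ℂ) - P) + ((t - c) * (t - c)⁻¹) • P := by
        module
      rw [this, mul_inv_cancel₀ ht0, mul_inv_cancel₀ (sub_ne_zero.mpr htc), one_smul,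
        one_smul, sub_add_cancel]
    have hmul2 : Q * (algebraMap ℝ (Matrix n n ℂ) t - a) = 1 := by
      rw [halg, hQ, ha, mul_sub, add_mul, add_mul, smul_mul_assoc, smul_mul_assoc,
        smul_mul_assoc, smul_mul_assoc, mul_smul_comm, mul_smul_comm, mul_smul_comm,
        mul_smul_comm, mul_one, mul_one, h1P, hP2]
      have : t⁻¹ • t • ((1 : Matrix n n ℂ) - P) + (t - c)⁻¹ • t • P -
          (t⁻¹ • c • (0 : Matrix n n ℂ) + (t - c)⁻¹ • c • P)
          = (t⁻¹ * t) • ((1 : Matrix n n ℂ) - P) + ((t - c)⁻¹ * (t - c)) • P := by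
        module
      rw [this, inv_mul_cancel₀ ht0, inv_mul_cancel₀ (sub_ne_zero.mpr htc), one_smul,
        one_smul, sub_add_cancel]
    exact ⟨⟨algebraMap ℝ (Matrix n n ℂ) t - a, Q, hmul, hmul2⟩, rfl⟩
  have hcongr : matRPow a (1 / 2 : ℝ)
      = cfc (fun x : ℝ => (c⁻¹ * Real.sqrt c) * x) a := by
    apply cfc_congr
    intro x hx
    rcases hspec hx with h | h
    · subst h
      simp [Real.zero_rpow (by norm_num : (1 / 2 : ℝ) ≠ 0)]
    · subst h
      simp only
      rw [← Real.sqrt_eq_rpow]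
      field_simp
  rw [matRPow] at hcongr
  rw [matRPow, hcongr, cfc_const_mul_id (R := ℝ) (c⁻¹ * Real.sqrt c) a hsa, ha,
    smul_smul]
  congr 1
  field_simp
end

noncomputable section

lemma fourier_unitary' (d : ℕ) (hd : 2 ≤ d) (j k : Fin d) :
    ∑ i : Fin d, fourierMat d j i * (starRingEnd ℂ) (fourierMat d k i)
      = if j = k then 1 else 0 := by
  have h := fourier_unitary d hd k j
  calc ∑ i : Fin d, fourierMat d j i * (starRingEnd ℂ) (fourierMat d k i)
      = ∑ i : Fin d, (starRingEnd ℂ) (fourierMat d i k) * fourierMat d i j :=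
        Finset.sum_congr rfl fun i _ => by
          rw [fourier_symm d j i, fourier_symm d k i]; ring
    _ = if k = j then 1 else 0 := h
    _ = if j = k then 1 else 0 := by simp [eq_comm]

def Pmat (d : ℕ) : Matrix (Fin d × Fin d) (Fin d × Fin d) ℂ :=
  Matrix.of fun x y => if x = y ∧ x.1 = x.2 then 1 else 0

lemma Pmat_selfAdjoint (d : ℕ) : IsSelfAdjoint (Pmat d) := by
  show star (Pmat d) = Pmat d
  rw [Matrix.star_eq_conjTranspose]
  ext x y
  simp only [conjTranspose_apply, Pmat, of_apply, apply_ite (star : ℂ → ℂ), star_one, star_zero]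
  by_cases h : x = y
  · subst h; rfl
  · rw [if_neg (by tauto), if_neg (by tauto)]

lemma Pmat_idem (d : ℕ) : Pmat d * Pmat d = Pmat d := by
  ext x y
  simp only [mul_apply, Pmat, of_apply]
  rw [Finset.sum_eq_single x]
  · by_cases h : x = y
    · subst h
      by_cases hx : x.1 = x.2 <;> simp [hx]
    · simp [h]
  · intro z _ hz
    rw [if_neg (by tauto), zero_mul]
  · intro h
    exact absurd (Finset.mem_univ x) h

lemma YYH (d : ℕ) (hd : 2 ≤ d) :
    Ymat d * (Ymat d)ᴴ = ((((d : ℝ) ^ 2)⁻¹ : ℝ)) • Pmat d := by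
  have hd0 : (d : ℂ) ≠ 0 := by exact_mod_cast (by omega : d ≠ 0)
  ext x y
  obtain ⟨a, b⟩ := x
  obtain ⟨a', b'⟩ := y
  simp only [mul_apply, conjTranspose_apply, Ymat, Pmat, of_apply, Matrix.smul_apply]
  by_cases hab : a = b
  · by_cases ha'b' : a' = b'
    · subst hab; subst ha'b'
      rw [Fintype.sum_prod_type]
      have hinner : ∀ z1 : Fin d,
          (∑ z2 : Fin d,
            (if a = a ∧ z1 = z2 then (1 / (d : ℂ)) * fourierMat d a z1 else 0) *
              star (if a' = a' ∧ z1 = z2 then (1 / (d : ℂ)) * fourierMat d a' z1 else 0))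
          = ((1 / (d : ℂ)) * (1 / (d : ℂ))) *
              (fourierMat d a z1 * (starRingEnd ℂ) (fourierMat d a' z1)) := by
        intro z1
        rw [Finset.sum_eq_single z1]
        · rw [if_pos ⟨rfl, rfl⟩, if_pos ⟨rfl, rfl⟩]
          rw [star_mul']
          have : star ((1 : ℂ) / (d : ℂ)) = 1 / (d : ℂ) := by
            simp [star_div₀, Complex.star_def, Complex.conj_natCast]
          rw [this]
          have : star (fourierMat d a' z1) = (starRingEnd ℂ) (fourierMat d a' z1) := rfl
          rw [this]
          ring
        · intro z2 _ hz2
          rw [if_neg (by tauto), zero_mul]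
        · intro h; exact absurd (Finset.mem_univ z1) h
      rw [Finset.sum_congr rfl fun z1 _ => hinner z1, ← Finset.mul_sum,
        fourier_unitary' d hd a a']
      by_cases haa : a = a'
      · subst haa
        rw [if_pos rfl, if_pos ⟨rfl, rfl⟩]
        push_cast
        field_simp
        simp [Complex.real_smul, hd0]
      · rw [if_neg haa, if_neg (show ¬((a, a) = (a', a') ∧ a = a) by
          rintro ⟨hpq, -⟩
          rw [Prod.mk.injEq] at hpq
          exact haa hpq.1), mul_zero, smul_zero]
    · have h1 : ∀ z : Fin d × Fin d,
          (if a = b ∧ z.1 = z.2 then (1 / (d : ℂ)) * fourierMat d a z.1 else 0) *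
            star (if a' = b' ∧ z.1 = z.2 then (1 / (d : ℂ)) * fourierMat d a' z.1 else 0) = 0 := by
        intro z
        rw [if_neg (show ¬(a' = b' ∧ z.1 = z.2) by tauto), star_zero, mul_zero]
      rw [Finset.sum_congr rfl fun z _ => h1 z, Finset.sum_const, smul_zero,
        if_neg (show ¬((a, b) = (a', b') ∧ a = b) by
          rintro ⟨hpq, hab2⟩
          rw [Prod.mk.injEq] at hpq
          obtain ⟨h1', h2'⟩ := hpq
          subst h1'; subst h2'
          exact ha'b' hab2), smul_zero]
  · have h1 : ∀ z : Fin d × Fin d,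
        (if a = b ∧ z.1 = z.2 then (1 / (d : ℂ)) * fourierMat d a z.1 else 0) *
          star (if a' = b' ∧ z.1 = z.2 then (1 / (d : ℂ)) * fourierMat d a' z.1 else 0) = 0 := by
      intro z
      rw [if_neg (show ¬(a = b ∧ z.1 = z.2) by tauto), zero_mul]
    rw [Finset.sum_congr rfl fun z _ => h1 z, Finset.sum_const, smul_zero,
      if_neg (show ¬((a, b) = (a', b') ∧ a = b) by rintro ⟨-, h⟩; exact hab h), smul_zero]

lemma HYY (d : ℕ) (hd : 2 ≤ d) :
    (Ymat d)ᴴ * Ymat d = ((((d : ℝ) ^ 2)⁻¹ : ℝ)) • Pmat d := by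
  have hd0 : (d : ℂ) ≠ 0 := by exact_mod_cast (by omega : d ≠ 0)
  ext x y
  obtain ⟨a, b⟩ := x
  obtain ⟨a', b'⟩ := y
  simp only [mul_apply, conjTranspose_apply, Ymat, Pmat, of_apply, Matrix.smul_apply]
  by_cases hab : a = b
  · by_cases ha'b' : a' = b'
    · subst hab; subst ha'b'
      rw [Fintype.sum_prod_type]
      have hinner : ∀ z1 : Fin d,
          (∑ z2 : Fin d,
            star (if z1 = z2 ∧ a = a then (1 / (d : ℂ)) * fourierMat d z1 a else 0) *
              (if z1 = z2 ∧ a' = a' then (1 / (d : ℂ)) * fourierMat d z1 a' else 0))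
          = ((1 / (d : ℂ)) * (1 / (d : ℂ))) *
              ((starRingEnd ℂ) (fourierMat d z1 a) * fourierMat d z1 a') := by
        intro z1
        rw [Finset.sum_eq_single z1]
        · rw [if_pos ⟨rfl, rfl⟩, if_pos ⟨rfl, rfl⟩, star_mul']
          have : star ((1 : ℂ) / (d : ℂ)) = 1 / (d : ℂ) := by
            simp [Complex.star_def, Complex.conj_natCast]
          rw [this]
          have : star (fourierMat d z1 a) = (starRingEnd ℂ) (fourierMat d z1 a) := rfl
          rw [this]
          ring
        · intro z2 _ hz2
          rw [if_neg (by tauto), star_zero, zero_mul]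
        · intro h; exact absurd (Finset.mem_univ z1) h
      rw [Finset.sum_congr rfl fun z1 _ => hinner z1, ← Finset.mul_sum,
        fourier_unitary d hd a a']
      by_cases haa : a = a'
      · subst haa
        rw [if_pos rfl, if_pos ⟨rfl, rfl⟩]
        push_cast
        field_simp
        simp [Complex.real_smul, hd0]
      · rw [if_neg haa, if_neg (show ¬((a, a) = (a', a') ∧ a = a) by
          rintro ⟨hpq, -⟩
          rw [Prod.mk.injEq] at hpq
          exact haa hpq.1), mul_zero, smul_zero]
    · have h1 : ∀ z : Fin d × Fin d,
          star (if z.1 = z.2 ∧ a = b then (1 / (d : ℂ)) * fourierMat d z.1 a else 0) *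
            (if z.1 = z.2 ∧ a' = b' then (1 / (d : ℂ)) * fourierMat d z.1 a' else 0) = 0 := by
        intro z
        rw [if_neg (show ¬(z.1 = z.2 ∧ a' = b') by tauto), mul_zero]
      rw [Finset.sum_congr rfl fun z _ => h1 z, Finset.sum_const, smul_zero,
        if_neg (show ¬((a, b) = (a', b') ∧ a = b) by
          rintro ⟨hpq, hab2⟩
          rw [Prod.mk.injEq] at hpq
          obtain ⟨h1', h2'⟩ := hpq
          subst h1'; subst h2'
          exact ha'b' hab2), smul_zero]
  · have h1 : ∀ z : Fin d × Fin d,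
        star (if z.1 = z.2 ∧ a = b then (1 / (d : ℂ)) * fourierMat d z.1 a else 0) *
          (if z.1 = z.2 ∧ a' = b' then (1 / (d : ℂ)) * fourierMat d z.1 a' else 0) = 0 := by
      intro z
      rw [if_neg (show ¬(z.1 = z.2 ∧ a = b) by tauto), star_zero, zero_mul]
    rw [Finset.sum_congr rfl fun z _ => h1 z, Finset.sum_const, smul_zero,
      if_neg (show ¬((a, b) = (a', b') ∧ a = b) by rintro ⟨-, h⟩; exact hab h), smul_zero]
end

noncomputable section
lemma sqrtYY (d : ℕ) (hd : 2 ≤ d) :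
    matRPow (Ymat d * (Ymat d)ᴴ) (1 / 2 : ℝ) = (((d : ℝ))⁻¹) • Pmat d := by
  haveI : Nonempty (Fin d × Fin d) := ⟨(⟨0, by omega⟩, ⟨0, by omega⟩)⟩
  have hdpos : (0 : ℝ) < d := by exact_mod_cast (by omega : 0 < d)
  rw [YYH d hd, matRPow_smul_proj (Pmat d) (Pmat_selfAdjoint d) (Pmat_idem d) _
    (inv_pos.mpr (pow_pos hdpos 2))]
  congr 1
  rw [Real.sqrt_inv, Real.sqrt_sq (le_of_lt hdpos)]

lemma sqrtHYY (d : ℕ) (hd : 2 ≤ d) :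
    matRPow ((Ymat d)ᴴ * Ymat d) (1 / 2 : ℝ) = (((d : ℝ))⁻¹) • Pmat d := by
  haveI : Nonempty (Fin d × Fin d) := ⟨(⟨0, by omega⟩, ⟨0, by omega⟩)⟩
  have hdpos : (0 : ℝ) < d := by exact_mod_cast (by omega : 0 < d)
  rw [HYY d hd, matRPow_smul_proj (Pmat d) (Pmat_selfAdjoint d) (Pmat_idem d) _
    (inv_pos.mpr (pow_pos hdpos 2))]
  congr 1
  rw [Real.sqrt_inv, Real.sqrt_sq (le_of_lt hdpos)]

def Bmat (d : ℕ) : Matrix (Fin d) ((Fin 2 × Fin d) × (Fin 2 × Fin d)) ℂ :=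
  Matrix.of fun i x =>
    ((Real.sqrt (pparam d / (2 * d)) : ℝ) : ℂ) *
      (if x.1.1 = 0 ∧ x.2.1 = 1 ∧ x.1.2 = i ∧ x.2.2 = i then 1
       else if x.1.1 = 1 ∧ x.2.1 = 0 ∧ x.1.2 = x.2.2 then -(fourierMat d i x.1.2) else 0)

lemma key (d : ℕ) (hd : 2 ≤ d) :
    ((1 + pparam d : ℝ) • CSmat d - Mmat d) = (Bmat d)ᴴ * Bmat d := by
  have hdpos : (0 : ℝ) < d := by exact_mod_cast (by omega : 0 < d)
  have hp : 0 < pparam d := by rw [pparam]; positivity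
  have h1p : (0 : ℝ) < 1 + pparam d := by linarith
  ext x y
  obtain ⟨⟨s, j⟩, t, k⟩ := x
  obtain ⟨⟨s', j'⟩, t', k'⟩ := y
  simp only [Matrix.sub_apply, Matrix.smul_apply, CSmat, Mmat, of_apply, conjTranspose_apply, mul_apply,
    Bmat, sqrtYY d hd, sqrtHYY d hd]
  have h01 : ¬(0 : Fin 2) = 1 := by decide
  have h10 : ¬(1 : Fin 2) = 0 := by decide
  have hdC : (d : ℂ) ≠ 0 := by exact_mod_cast (by omega : d ≠ 0)
  have h1pC : ((1 : ℂ) + (pparam d : ℝ)) ≠ 0 := by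
    have : ((1 + pparam d : ℝ) : ℂ) ≠ 0 := Complex.ofReal_ne_zero.mpr (ne_of_gt h1p)
    push_cast at this
    exact this
  have hpdn : (0 : ℝ) ≤ pparam d / (2 * d) := div_nonneg hp.le (by linarith)
  have hs2C : ((Real.sqrt (pparam d / (2 * (d : ℝ))) : ℝ) : ℂ) *
      ((Real.sqrt (pparam d / (2 * (d : ℝ))) : ℝ) : ℂ) = ((pparam d : ℝ) : ℂ) / (2 * (d : ℂ)) := by
    rw [← Complex.ofReal_mul, Real.mul_self_sqrt hpdn]
    push_cast
    ring
  fin_cases s <;> fin_cases t <;> fin_cases s' <;> fin_cases t' <;>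
    simp only [Fin.zero_eta, Fin.mk_one, CSblock, Mblock, Prod.mk.injEq, h01, h10,
      eq_self_iff_true, true_and, and_true, false_and, and_false, if_true, if_false,
      not_false_iff, if_neg, sqrtYY d hd, sqrtHYY d hd] <;>
    simp only [Matrix.smul_apply, one_apply, of_apply, Pmat, Ymat, conjTranspose_apply,
      star_zero, mul_zero, zero_mul, Finset.sum_const_zero, sub_zero, zero_sub,
      Complex.real_smul, Matrix.zero_apply, neg_zero, smul_eq_mul]
  -- six remaining goals
  · -- (0,0),(0,0)
    split_ifs
    · push_cast
      field_simp
      ring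
    · ring
  · -- (0,1),(0,1)
    by_cases hjk : j = k
    · subst hjk
      by_cases hj'k' : j' = k'
      · subst hj'k'
        by_cases hjj' : j = j'
        · subst hjj'
          rw [Finset.sum_eq_single j (fun x _ hx => by
              rw [if_neg (show ¬(j = x ∧ j = x) from fun h => hx h.1.symm), mul_zero,
                star_zero, zero_mul])
            (fun h => absurd (Finset.mem_univ j) h)]
          simp only [eq_self_iff_true, and_self, if_true, Prod.mk.injEq, true_and, and_true,
            mul_one, Complex.star_def, Complex.conj_ofReal]
          rw [hs2C]
          push_cast
          field_simp
          ring
        · refine Eq.trans ?_ (Finset.sum_eq_zero fun x _ => ?_).symm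
          · rw [if_neg (show ¬((j, j) = (j', j') ∧ j = j) from
              fun h => hjj' (congrArg Prod.fst h.1))]
            ring
          · by_cases hx : j = x
            · rw [if_neg (show ¬(j' = x ∧ j' = x) from fun h => hjj' (hx.trans h.1.symm)),
                mul_zero, mul_zero]
            · rw [if_neg (show ¬(j = x ∧ j = x) from fun h => hx h.1), mul_zero,
                star_zero, zero_mul]
      · refine Eq.trans ?_ (Finset.sum_eq_zero fun x _ => ?_).symm
        · rw [if_neg (show ¬((j, j) = (j', k') ∧ j = j) from
            fun h => hj'k' ((congrArg Prod.fst h.1).symm.trans (congrArg Prod.snd h.1)))]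
          ring
        · rw [if_neg (show ¬(j' = x ∧ k' = x) from fun h => hj'k' (h.1.trans h.2.symm)),
            mul_zero, mul_zero]
    · refine Eq.trans ?_ (Finset.sum_eq_zero fun x _ => ?_).symm
      · rw [if_neg (show ¬((j, k) = (j', k') ∧ j = k) from fun h => hjk h.2)]
        ring
      · rw [if_neg (show ¬(j = x ∧ k = x) from fun h => hjk (h.1.trans h.2.symm)), mul_zero,
          star_zero, zero_mul]
  · -- (0,1),(1,0)
    by_cases hjk : j = k
    · subst hjk
      by_cases hj'k' : j' = k'
      · subst hj'k'
        rw [Finset.sum_eq_single j (fun x _ hx => by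
            rw [if_neg (show ¬(j = x ∧ j = x) from fun h => hx h.1.symm), mul_zero,
              star_zero, zero_mul])
          (fun h => absurd (Finset.mem_univ j) h)]
        simp only [eq_self_iff_true, and_self, if_true, mul_one, Complex.star_def,
          Complex.conj_ofReal]
        linear_combination (fourierMat d j j') * hs2C
      · refine Eq.trans ?_ (Finset.sum_eq_zero fun x _ => ?_).symm
        · rw [if_neg (show ¬(j = j ∧ j' = k') from fun h => hj'k' h.2)]
          ring
        · rw [if_neg hj'k', mul_zero, mul_zero]
    · refine Eq.trans ?_ (Finset.sum_eq_zero fun x _ => ?_).symm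
      · rw [if_neg (show ¬(j = k ∧ j' = k') from fun h => hjk h.1)]
        ring
      · rw [if_neg (show ¬(j = x ∧ k = x) from fun h => hjk (h.1.trans h.2.symm)), mul_zero,
          star_zero, zero_mul]
  · -- (1,0),(0,1)
    by_cases hjk : j = k
    · subst hjk
      by_cases hj'k' : j' = k'
      · subst hj'k'
        rw [Finset.sum_eq_single j' (fun x _ hx => by
            rw [if_neg (show ¬(j' = x ∧ j' = x) from fun h => hx h.1.symm), mul_zero, mul_zero])
          (fun h => absurd (Finset.mem_univ j') h)]
        simp only [eq_self_iff_true, and_self, if_true, mul_one, Complex.star_def,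
          _root_.map_mul, map_neg, Complex.conj_ofReal, map_div₀, _root_.map_one,
          Complex.conj_natCast]
        linear_combination ((starRingEnd ℂ) (fourierMat d j' j)) * hs2C
      · refine Eq.trans ?_ (Finset.sum_eq_zero fun x _ => ?_).symm
        · rw [if_neg (show ¬(j' = k' ∧ j = j) from fun h => hj'k' h.1), star_zero]
          ring
        · rw [if_neg (show ¬(j' = x ∧ k' = x) from fun h => hj'k' (h.1.trans h.2.symm)),
            mul_zero, mul_zero]
    · refine Eq.trans ?_ (Finset.sum_eq_zero fun x _ => ?_).symm
      · rw [if_neg (show ¬(j' = k' ∧ j = k) from fun h => hjk h.2), star_zero]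
        ring
      · rw [if_neg hjk, mul_zero, star_zero, zero_mul]
  · -- (1,0),(1,0)
    by_cases hjk : j = k
    · subst hjk
      by_cases hj'k' : j' = k'
      · subst hj'k'
        have hterm : ∀ x : Fin d,
            star (((Real.sqrt (pparam d / (2 * (d : ℝ))) : ℝ) : ℂ) *
                if j = j then -fourierMat d x j else 0) *
              (((Real.sqrt (pparam d / (2 * (d : ℝ))) : ℝ) : ℂ) *
                if j' = j' then -fourierMat d x j' else 0)
            = (((Real.sqrt (pparam d / (2 * (d : ℝ))) : ℝ) : ℂ) *
                ((Real.sqrt (pparam d / (2 * (d : ℝ))) : ℝ) : ℂ)) *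
                ((starRingEnd ℂ) (fourierMat d x j) * fourierMat d x j') := by
          intro x
          simp only [eq_self_iff_true, if_true, Complex.star_def, _root_.map_mul, map_neg,
            Complex.conj_ofReal]
          ring
        rw [Finset.sum_congr rfl fun x _ => hterm x, ← Finset.mul_sum,
          fourier_unitary d hd j j', hs2C]
        by_cases hjj' : j = j'
        · subst hjj'
          rw [if_pos rfl, if_pos ⟨rfl, rfl⟩, mul_one, mul_one]
          push_cast
          field_simp
          ring
        · rw [if_neg hjj', if_neg (show ¬((j, j) = (j', j') ∧ j = j) from
            fun h => hjj' (congrArg Prod.fst h.1)), mul_zero]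
          ring
      · refine Eq.trans ?_ (Finset.sum_eq_zero fun x _ => ?_).symm
        · rw [if_neg (show ¬((j, j) = (j', k') ∧ j = j) from
            fun h => hj'k' ((congrArg Prod.fst h.1).symm.trans (congrArg Prod.snd h.1)))]
          ring
        · rw [if_neg hj'k', mul_zero, mul_zero]
    · refine Eq.trans ?_ (Finset.sum_eq_zero fun x _ => ?_).symm
      · rw [if_neg (show ¬((j, k) = (j', k') ∧ j = k) from fun h => hjk h.2)]
        ring
      · rw [if_neg hjk, mul_zero, star_zero, zero_mul]
  · -- (1,1),(1,1)
    split_ifs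
    · push_cast
      field_simp
      ring
    · ring
end

/-- **Max-relative entropy computation** in the repeater example: `(1+p)·C_S − M` is positive
semidefinite; equivalently `D_max(M‖C_S) ≤ log₂(1 + p) = log₂(1 + 1/(√d + 1))`. -/
theorem repeater_dmax_bound (d : ℕ) (hd : 2 ≤ d) :
    (((1 + pparam d : ℝ)) • CSmat d - Mmat d).PosSemidef ∧
      Dmax (Mmat d) (CSmat d) ≤ ((Real.logb 2 (1 + pparam d) : ℝ) : EReal) := by
  have hpos : (((1 + pparam d : ℝ)) • CSmat d - Mmat d).PosSemidef := by
    rw [key d hd]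
    exact Matrix.posSemidef_conjTranspose_mul_self (Bmat d)
  refine ⟨hpos, ?_⟩
  have hp : 0 < pparam d := by rw [pparam]; positivity
  rw [Dmax]
  exact iInf_le
    (fun c : {c : ℝ // 0 < c ∧ (((c : ℝ)) • CSmat d - Mmat d).PosSemidef} =>
      ((Real.logb 2 (c : ℝ) : ℝ) : EReal))
    (⟨1 + pparam d, ⟨by linarith, hpos⟩⟩ :
      {c : ℝ // 0 < c ∧ (((c : ℝ)) • CSmat d - Mmat d).PosSemidef})
end
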